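/- Let A(n,k) be the output array of the identity sequence y_n = n. Then A(n,k) = C(n+k, k) · (n-k+1)/(n+1) for 0 ≤ k ≤ n (the ballot numbers of the Catalan triangle). -/

import Mathlib

/-- `x : Fin n → ℕ` (0-indexed version of `(x_1,…,x_n)`) is a valid n-tuple for the
input sequence `y`: `x_1 ≤ y n` and `x_{j+1} ≤ min (x_j) (y (n - j))` for `1 ≤ j ≤ n-1`. -/
def IsValid (y : ℕ → ℕ) (n : ℕ) (x : Fin n → ℕ) : Prop :=
  (∀ h : 0 < n, x ⟨0, h⟩ ≤ y n) ∧
  ∀ i : ℕ, ∀ h : i + 1 < n,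
    x ⟨i + 1, h⟩ ≤ min (x ⟨i, Nat.lt_of_succ_lt h⟩) (y (n - (i + 1)))

/-- `A y n k` : number of valid n-tuples whose first entry equals `k`. -/
noncomputable def A (y : ℕ → ℕ) (n k : ℕ) : ℕ :=
  Nat.card {x : Fin n → ℕ // IsValid y n x ∧ ∀ h : 0 < n, x ⟨0, h⟩ = k}

/-- `W y n` : total number of valid n-tuples. -/
noncomputable def W (y : ℕ → ℕ) (n : ℕ) : ℕ :=
  Nat.card {x : Fin n → ℕ // IsValid y n x}

/-! ### Auxiliary material -/

lemma step14 (k d a b c : ℤ) (h1 : c = a + b) (key : b * (k + 1) = a * (k + d + 2)) :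
    (k + d + 2) * (a * (d + 3)) + (k + d + 3) * (b * (d + 1)) = (k + d + 2) * (c * (d + 2)) := by
  subst h1; linear_combination -key

open Finset in
lemma natid14 (n : ℕ) : ∀ k ≤ n,
    (n + 2) * ∑ j ∈ range (k + 1), (n + j).choose j * (n - j + 1)
      = (n + 1) * ((n + k + 1).choose k * (n - k + 2)) := by
  intro k hk
  induction k with
  | zero => simp [Nat.mul_comm]
  | succ k ih =>
    have hk' : k ≤ n := Nat.le_of_succ_le hk
    rw [sum_range_succ, Nat.mul_add, ih hk']
    have h1 : (n + k + 2).choose (k + 1)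
        = (n + k + 1).choose k + (n + k + 1).choose (k + 1) :=
      Nat.choose_succ_succ (n + k + 1) k
    have key : (n + k + 1).choose (k + 1) * (k + 1) = (n + k + 1).choose k * (n + 1) := by
      have h := Nat.choose_succ_right_eq (n + k + 1) k
      have h2 : n + k + 1 - k = n + 1 := by omega
      rwa [h2] at h
    obtain ⟨d, rfl⟩ : ∃ d, n = k + d + 1 := ⟨n - k - 1, by omega⟩
    have h3 : k + d + 1 - (k + 1) + 1 = d + 1 := by omega
    have h4 : k + d + 1 - k + 2 = d + 3 := by omega
    have h5 : k + d + 1 - (k + 1) + 2 = d + 2 := by omega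
    show (k + d + 1 + 1) * ((k + d + 1 + k + 1).choose k * (k + d + 1 - k + 2)) +
        (k + d + 1 + 2) * ((k + d + 1 + k + 1).choose (k + 1) * (k + d + 1 - (k + 1) + 1)) =
        (k + d + 1 + 1) * ((k + d + 1 + k + 2).choose (k + 1) * (k + d + 1 - (k + 1) + 2))
    rw [h3, h4, h5]
    have hz := step14 k d ((k + d + 1 + k + 1).choose k) ((k + d + 1 + k + 1).choose (k + 1))
      ((k + d + 1 + k + 2).choose (k + 1)) (by exact_mod_cast h1) (by exact_mod_cast key)
    exact_mod_cast hz

abbrev Sty (n k : ℕ) := {x : Fin n → ℕ // IsValid (fun m => m) n x ∧ ∀ h : 0 < n, x ⟨0, h⟩ = k}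

abbrev Tty (n k : ℕ) := Σ j : Fin (min k (n+1) + 1), Sty (n+1) (j : ℕ)

def mycons (n k : ℕ) (x : Fin (n+1) → ℕ) : Fin (n+2) → ℕ :=
  fun i => match i with
  | ⟨0, _⟩ => k
  | ⟨j+1, h⟩ => x ⟨j, Nat.lt_of_succ_lt_succ h⟩

def fwd (n k : ℕ) (s : Sty (n+2) k) : Tty n k := by
  refine ⟨⟨s.1 ⟨1, by omega⟩, ?_⟩, fun i => s.1 i.succ, ⟨?_, ?_⟩, ?_⟩
  · have h : s.1 ⟨1, by omega⟩ ≤ min (s.1 ⟨0, by omega⟩) (n + 1) := s.2.1.2 0 (by omega)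
    have h0 : s.1 ⟨0, by omega⟩ = k := s.2.2 (by omega)
    rw [h0] at h
    omega
  · intro h0
    have h : s.1 ⟨1, by omega⟩ ≤ min (s.1 ⟨0, by omega⟩) (n + 1) := s.2.1.2 0 (by omega)
    exact le_trans h (min_le_right _ _)
  · intro i h
    have hv := s.2.1.2 (i + 1) (by omega)
    have he : n + 2 - (i + 1 + 1) = n + 1 - (i + 1) := by omega
    rw [he] at hv
    exact hv
  · intro _; rfl

def bwd (n k : ℕ) (hk : k ≤ n + 2) (t : Tty n k) : Sty (n+2) k := by
  refine ⟨mycons n k t.2.1, ⟨fun _ => hk, ?_⟩, fun _ => rfl⟩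
  intro i h
  match i with
  | 0 =>
    show t.2.1 ⟨0, by omega⟩ ≤ min k (n + 2 - 1)
    have h1 : (t.2.1 : Fin (n+1) → ℕ) ⟨0, by omega⟩ = (t.1 : ℕ) := t.2.2.2 (by omega)
    have h2 : (t.1 : ℕ) < min k (n+1) + 1 := t.1.isLt
    have h3 : n + 2 - 1 = n + 1 := by omega
    rw [h3, h1]
    omega
  | (j + 1) =>
    show t.2.1 ⟨j + 1, by omega⟩ ≤ min (t.2.1 ⟨j, by omega⟩) (n + 2 - (j + 1 + 1))
    have hv := t.2.2.1.2 j (by omega)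
    have he : n + 2 - (j + 1 + 1) = n + 1 - (j + 1) := by omega
    rw [he]
    exact hv

def recEquiv (n k : ℕ) (hk : k ≤ n + 2) : Sty (n+2) k ≃ Tty n k where
  toFun := fwd n k
  invFun := bwd n k hk
  left_inv s := by
    apply Subtype.ext
    funext ⟨v, hv⟩
    match v with
    | 0 => exact (s.2.2 (by omega)).symm
    | j + 1 => rfl
  right_inv t := by
    rcases t with ⟨⟨jv, hj⟩, x, hx⟩
    have hfst : x ⟨0, by omega⟩ = jv := hx.2 (by omega)
    refine Sigma.ext (Fin.ext ?_) ((Subtype.heq_iff_coe_eq ?_).2 ?_)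
    · exact hfst
    · intro z
      show (_ ∧ ∀ h : 0 < n+1, z ⟨0, h⟩ = x ⟨0, by omega⟩) ↔ _
      simp only [hfst]
    · funext i; rfl

lemma valid_bound {n : ℕ} {x : Fin n → ℕ} (hx : IsValid (fun m => m) n x) :
    ∀ i : Fin n, x i ≤ n := by
  intro ⟨v, hv⟩
  induction v with
  | zero => exact hx.1 hv
  | succ j ihj =>
    have h := hx.2 j hv
    exact le_trans (le_trans h (min_le_left _ _)) (ihj (Nat.lt_of_succ_lt hv))

instance finS (n k : ℕ) : Finite (Sty n k) := by
  refine Finite.of_injective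
    (fun s => (fun i => (⟨s.1 i, Nat.lt_succ_of_le (valid_bound s.2.1 i)⟩ : Fin (n+1)))) ?_
  intro s t h
  ext i
  exact congrArg Fin.val (congrFun h i)

lemma Arec (n k : ℕ) (hk : k ≤ n + 2) :
    A (fun m => m) (n+2) k = ∑ j ∈ Finset.range (min k (n+1) + 1), A (fun m => m) (n+1) j := by
  classical
  letI : ∀ j : Fin (min k (n+1) + 1), Fintype (Sty (n+1) (j : ℕ)) := fun _ => Fintype.ofFinite _
  rw [show A (fun m => m) (n+2) k = Nat.card (Sty (n+2) k) from rfl,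
    Nat.card_congr (recEquiv n k hk), Nat.card_eq_fintype_card, Fintype.card_sigma,
    ← Fin.sum_univ_eq_sum_range fun j => A (fun m => m) (n+1) j]
  refine Finset.sum_congr rfl fun j _ => ?_
  rw [show A (fun m => m) (n+1) (j : ℕ) = Nat.card (Sty (n+1) (j : ℕ)) from rfl,
    Nat.card_eq_fintype_card]

lemma A_one (k : ℕ) (hk : k ≤ 1) : A (fun m => m) 1 k = 1 := by
  have hne : Nonempty (Sty 1 k) :=
    ⟨⟨fun _ => k, ⟨fun _ => hk, fun i h => absurd h (by omega)⟩, fun _ => rfl⟩⟩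
  have hsub : Subsingleton (Sty 1 k) := by
    constructor
    rintro ⟨x, _, hx⟩ ⟨z, _, hz⟩
    apply Subtype.ext
    funext i
    have hi : i = ⟨0, by omega⟩ := by ext; omega
    rw [hi]
    show x ⟨0, by omega⟩ = z ⟨0, by omega⟩
    rw [hx (by omega), hz (by omega)]
  exact Nat.card_unique

lemma main14 : ∀ n, 1 ≤ n → ∀ k, k ≤ n →
    (n + 1) * A (fun m => m) n k = (n + k).choose k * (n - k + 1) := by
  intro n
  induction n with
  | zero => omega
  | succ m ih =>
    intro _ k hk
    match m, ih, hk with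
    | 0, _, hk =>
      rw [A_one k hk]
      interval_cases k <;> simp
    | (p+1), ih, hk =>
      have ihp := ih (by omega)
      apply Nat.eq_of_mul_eq_mul_left (show 0 < p + 2 by omega)
      have hK : min k (p+1) ≤ p + 1 := min_le_right _ _
      have hid := natid14 (p+1) (min k (p+1)) hK
      rw [Arec p k hk]
      calc (p + 2) * ((p + 1 + 1 + 1) * ∑ j ∈ Finset.range (min k (p+1) + 1), A (fun m => m) (p+1) j)
          = (p + 1 + 2) * ∑ j ∈ Finset.range (min k (p+1) + 1), (p + 2) * A (fun m => m) (p+1) j := by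
            rw [← Finset.mul_sum]; ring
        _ = (p + 1 + 2) * ∑ j ∈ Finset.range (min k (p+1) + 1), (p + 1 + j).choose j * (p + 1 - j + 1) := by
            congr 1
            refine Finset.sum_congr rfl fun j hj => ?_
            have hj' : j ≤ p + 1 := by
              have := Finset.mem_range.1 hj; omega
            exact ihp j hj'
        _ = (p + 1 + 1) * ((p + 1 + min k (p+1) + 1).choose (min k (p+1)) * (p + 1 - min k (p+1) + 2)) := hid
        _ = (p + 2) * ((p + 1 + 1 + k).choose k * (p + 1 + 1 - k + 1)) := by
            rcases Nat.lt_or_ge k (p + 2) with hlt | hge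
            · have hm : min k (p+1) = k := by omega
              rw [hm]
              have e1 : p + 1 + k + 1 = p + 1 + 1 + k := by omega
              have e2 : p + 1 - k + 2 = p + 1 + 1 - k + 1 := by omega
              rw [e1, e2]
            · have hke : k = p + 2 := by omega
              subst hke
              have hm : min (p+2) (p+1) = p + 1 := by omega
              rw [hm]
              have e1 : p + 1 + (p + 1) + 1 = 2 * p + 3 := by omega
              have e2 : p + 1 - (p + 1) + 2 = 2 := by omega
              have e3 : p + 1 + 1 + (p + 2) = 2 * p + 4 := by omega
              have e4 : p + 1 + 1 - (p + 2) + 1 = 1 := by omega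
              rw [e1, e2, e3, e4]
              have hc : (2 * p + 4).choose (p + 2)
                  = (2 * p + 3).choose (p + 1) + (2 * p + 3).choose (p + 2) := by
                have := Nat.choose_succ_succ (2 * p + 3) (p + 1)
                convert this using 2
              have hsymm : (2 * p + 3).choose (p + 1) = (2 * p + 3).choose (p + 2) := by
                have := Nat.choose_symm (show p + 2 ≤ 2 * p + 3 by omega)
                have h2 : 2 * p + 3 - (p + 2) = p + 1 := by omega
                rw [h2] at this
                exact this
              rw [hc, ← hsymm]
              ring

theorem stmt14 (n k : ℕ) (hn : 1 ≤ n) (hk : k ≤ n) :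
    (n + 1) * A (fun m => m) n k = (n + k).choose k * (n - k + 1) := by
  exact main14 n hn k hk
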